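/- If G is a uniformly strongly Hopfian abelian group, then its torsion subgroup T is strongly Hopfian. -/

import Mathlib

/-- An abelian group is strongly Hopfian if for every endomorphism `φ`,
the ascending chain `ker φ ≤ ker φ² ≤ …` is eventually stationary. -/
def StronglyHopfian (G : Type*) [AddCommGroup G] : Prop :=
  ∀ φ : AddMonoid.End G, ∃ n : ℕ, ∀ m : ℕ, n ≤ m →
    AddMonoidHom.ker (φ ^ m : G →+ G) = AddMonoidHom.ker (φ ^ n : G →+ G)

/-- Uniformly strongly Hopfian: a single `n` works as SH-exponent
for all endomorphisms. -/
def UniformlyStronglyHopfian (G : Type*) [AddCommGroup G] : Prop :=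
  ∃ n : ℕ, ∀ φ : AddMonoid.End G,
    Set.InjOn (φ : G → G) (Set.range (φ ^ n : G →+ G))

open Submodule

private lemma end_pow_add {H : Type*} [AddCommGroup H] (φ : AddMonoid.End H) (a b : ℕ) (x : H) :
    (φ ^ (a + b)) x = (φ ^ a) ((φ ^ b) x) := by
  rw [pow_add]; rfl

private lemma elem_compl {G : Type*} [AddCommGroup G] (p : ℤ) (hp : Prime p)
    (A B : Submodule ℤ G) (hBA : B ≤ A)
    (hint : ∀ b ∈ B, (∃ a ∈ A, p • a = b) → b = 0) :
    ∃ C, C ≤ A ∧ B ⊓ C = ⊥ ∧ B ⊔ C = A := by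
  set S : Set (Submodule ℤ G) :=
    {C | C ≤ A ∧ (∀ a ∈ A, p • a ∈ C) ∧ B ⊓ C = ⊥} with hS
  set C₀ : Submodule ℤ G := A.map (p • (LinearMap.id : G →ₗ[ℤ] G)) with hC₀def
  have hC₀mem : ∀ x, x ∈ C₀ ↔ ∃ a ∈ A, p • a = x := by
    intro x
    simp [hC₀def, Submodule.mem_map]
  have hC₀ : C₀ ∈ S := by
    refine ⟨?_, ?_, ?_⟩
    · intro x hx
      obtain ⟨a, ha, rfl⟩ := (hC₀mem x).1 hx
      exact A.smul_mem p ha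
    · intro a ha
      exact (hC₀mem _).2 ⟨a, ha, rfl⟩
    · rw [eq_bot_iff]
      intro x hx
      obtain ⟨hxB, hxC⟩ := Submodule.mem_inf.1 hx
      have := hint x hxB ((hC₀mem x).1 hxC)
      simpa using this
  have hchaincond : ∀ c ⊆ S, IsChain (· ≤ ·) c → ∀ y ∈ c, ∃ ub ∈ S, ∀ z ∈ c, z ≤ ub := by
    intro c hcS hchain y hy
    refine ⟨sSup c, ⟨?_, ?_, ?_⟩, fun z hz => le_sSup hz⟩
    · exact sSup_le fun z hz => (hcS hz).1
    · intro a ha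
      exact (le_sSup hy) ((hcS hy).2.1 a ha)
    · rw [eq_bot_iff]
      intro x hx
      obtain ⟨hxB, hxs⟩ := Submodule.mem_inf.1 hx
      obtain ⟨z, hz, hxz⟩ :=
        (Submodule.mem_sSup_of_directed ⟨y, hy⟩ hchain.directedOn).1 hxs
      have := (hcS hz).2.2 ▸ Submodule.mem_inf.2 ⟨hxB, hxz⟩
      simpa using this
  obtain ⟨C, -, hCS, hCmax⟩ := zorn_le_nonempty₀ S hchaincond C₀ hC₀
  obtain ⟨hCA, hCcl, hBC⟩ := hCS
  refine ⟨C, hCA, hBC, le_antisymm (sup_le hBA hCA) ?_⟩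
  intro a ha
  by_contra hna
  have haC' : a ∈ C ⊔ span ℤ {a} :=
    Submodule.mem_sup_right (Submodule.mem_span_singleton_self a)
  have hCne : C ⊔ span ℤ {a} ≠ C := by
    intro h
    exact hna (Submodule.mem_sup_right (h ▸ haC'))
  have hnotS : C ⊔ span ℤ {a} ∉ S := by
    intro hmem
    exact hCne (le_antisymm (hCmax hmem le_sup_left) le_sup_left)
  have h1 : C ⊔ span ℤ {a} ≤ A :=
    sup_le hCA ((Submodule.span_le).2 (by simpa using ha))
  have h2 : ∀ a' ∈ A, p • a' ∈ C ⊔ span ℤ {a} := fun a' ha' =>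
    Submodule.mem_sup_left (hCcl a' ha')
  have h3 : B ⊓ (C ⊔ span ℤ {a}) ≠ ⊥ := fun h => hnotS ⟨h1, h2, h⟩
  obtain ⟨b, hb, hbne⟩ := Submodule.exists_mem_ne_zero_of_ne_bot h3
  obtain ⟨hbB, hbC'⟩ := Submodule.mem_inf.1 hb
  obtain ⟨c, hc, s, hs, hcs⟩ := Submodule.mem_sup.1 hbC'
  obtain ⟨k, rfl⟩ := Submodule.mem_span_singleton.1 hs
  by_cases hdvd : p ∣ k
  · obtain ⟨t, rfl⟩ := hdvd
    have : (p * t) • a ∈ C := by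
      rw [mul_smul]
      exact hCcl (t • a) (A.smul_mem t ha)
    have hbC : b ∈ C := hcs ▸ add_mem hc this
    have : b = 0 := by
      have := hBC ▸ Submodule.mem_inf.2 ⟨hbB, hbC⟩
      simpa using this
    exact hbne this
  · have hcop : IsCoprime p k := (hp.coprime_iff_not_dvd).2 hdvd
    obtain ⟨u, v, huv⟩ := hcop
    have : a = u • (p • a) + v • (k • a) := by
      rw [smul_smul, smul_smul, ← add_smul, huv, one_smul]
    have hka : k • a = b - c := by rw [← hcs]; abel
    have h1' : u • (p • a) ∈ C := C.smul_mem u (hCcl a ha)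
    have h2' : v • (b - c) ∈ B ⊔ C := by
      rw [smul_sub]
      exact sub_mem (Submodule.mem_sup_left (B.smul_mem v hbB))
        (Submodule.mem_sup_right (C.smul_mem v hc))
    have haBC : u • (p • a) + v • (b - c) ∈ B ⊔ C :=
      add_mem (Submodule.mem_sup_right h1') h2'
    rw [← hka, ← this] at haBC
    exact hna haBC

private lemma kulikov_compl {G : Type*} [AddCommGroup G] (p : ℤ) (hp : Prime p) :
    ∀ (n : ℕ) (A B : Submodule ℤ G), B ≤ A → (∀ b ∈ B, p ^ n • b = 0) →
    (∀ (j : ℕ), ∀ a ∈ A, p ^ j • a ∈ B → ∃ b ∈ B, p ^ j • b = p ^ j • a) →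
    ∃ C, C ≤ A ∧ B ⊓ C = ⊥ ∧ B ⊔ C = A := by
  intro n
  induction n with
  | zero =>
    intro A B hBA hbd _
    have hBbot : B = ⊥ := by
      rw [eq_bot_iff]
      intro b hb
      have := hbd b hb
      simpa using this
    refine ⟨A, le_rfl, ?_, ?_⟩
    · rw [hBbot]; simp
    · rw [hBbot]; simp
  | succ n ih =>
    intro A B hBA hbd hpure
    set μ : G →ₗ[ℤ] G := p • (LinearMap.id : G →ₗ[ℤ] G) with hμ
    have hμa : ∀ g : G, μ g = p • g := fun g => rfl
    set A' : Submodule ℤ G := A.map μ with hA'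
    set B' : Submodule ℤ G := B.map μ with hB'
    have hmemA' : ∀ x, x ∈ A' ↔ ∃ a ∈ A, p • a = x := by
      intro x; simp [hA', Submodule.mem_map, hμa]
    have hmemB' : ∀ x, x ∈ B' ↔ ∃ b ∈ B, p • b = x := by
      intro x; simp [hB', Submodule.mem_map, hμa]
    have hB'B : B' ≤ B := by
      intro x hx
      obtain ⟨b, hb, rfl⟩ := (hmemB' x).1 hx
      exact B.smul_mem p hb
    obtain ⟨H, hHA', hB'H, hB'Hsup⟩ := ih A' B' (Submodule.map_mono hBA)
      (by
        intro b' hb'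
        obtain ⟨b, hb, rfl⟩ := (hmemB' b').1 hb'
        rw [smul_smul, ← pow_succ]
        exact hbd b hb)
      (by
        intro j a' ha' hmem
        obtain ⟨a, ha, rfl⟩ := (hmemA' a').1 ha'
        have hps : ∀ g : G, p ^ j • p • g = p ^ (j + 1) • g := by
          intro g; rw [smul_smul, ← pow_succ]
        have hmem2 : p ^ (j + 1) • a ∈ B := by
          rw [← hps]
          exact hB'B (hmem)
        obtain ⟨b, hb, hpb⟩ := hpure (j + 1) a ha hmem2
        exact ⟨p • b, (hmemB' _).2 ⟨b, hb, rfl⟩, by rw [hps, hps, hpb]⟩)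
    set K : Submodule ℤ G := A ⊓ (Submodule.comap μ H) with hK
    set Bp : Submodule ℤ G := B ⊓ (LinearMap.ker μ) with hBp
    have hBpK : Bp ≤ K := by
      intro b hb
      obtain ⟨hbB, hbker⟩ := Submodule.mem_inf.1 hb
      refine Submodule.mem_inf.2 ⟨hBA hbB, ?_⟩
      rw [Submodule.mem_comap]
      rw [LinearMap.mem_ker] at hbker
      rw [hbker]
      exact H.zero_mem
    have hBH : B ⊓ H = ⊥ := by
      rw [eq_bot_iff]
      intro x hx
      obtain ⟨hxB, hxH⟩ := Submodule.mem_inf.1 hx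
      obtain ⟨a, ha, hpa⟩ := (hmemA' x).1 (hHA' hxH)
      obtain ⟨b, hb, hpb⟩ := hpure 1 a ha (by rw [pow_one, hpa]; exact hxB)
      have hxB' : x ∈ B' := (hmemB' x).2 ⟨b, hb, by rw [← pow_one p, hpb, pow_one, hpa]⟩
      have := hB'H ▸ Submodule.mem_inf.2 ⟨hxB', hxH⟩
      simpa using this
    obtain ⟨C, hCK, hBpC, hBpCsup⟩ := elem_compl p hp K Bp hBpK
      (by
        intro b hb ⟨k, hk, hpk⟩
        obtain ⟨hbB, -⟩ := Submodule.mem_inf.1 hb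
        obtain ⟨-, hkH⟩ := Submodule.mem_inf.1 hk
        rw [Submodule.mem_comap] at hkH
        have hbH : b ∈ H := by rw [← hpk]; exact hkH
        have := hBH ▸ Submodule.mem_inf.2 ⟨hbB, hbH⟩
        simpa using this)
    have hCA : C ≤ A := hCK.trans inf_le_left
    refine ⟨C, hCA, ?_, ?_⟩
    · rw [eq_bot_iff]
      intro x hx
      obtain ⟨hxB, hxC⟩ := Submodule.mem_inf.1 hx
      have hxK := hCK hxC
      obtain ⟨-, hxH⟩ := Submodule.mem_inf.1 hxK
      rw [Submodule.mem_comap] at hxH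
      have hμxB' : μ x ∈ B' := Submodule.mem_map_of_mem hxB
      have hμx0 : μ x = 0 := by
        have := hB'H ▸ Submodule.mem_inf.2 ⟨hμxB', hxH⟩
        simpa using this
      have hxBp : x ∈ Bp := Submodule.mem_inf.2 ⟨hxB, LinearMap.mem_ker.2 hμx0⟩
      have := hBpC ▸ Submodule.mem_inf.2 ⟨hxBp, hxC⟩
      simpa using this
    · refine le_antisymm (sup_le hBA hCA) ?_
      intro a ha
      have hμaA' : μ a ∈ A' := Submodule.mem_map_of_mem ha
      rw [← hB'Hsup] at hμaA'
      obtain ⟨b', hb', h, hh, hsum⟩ := Submodule.mem_sup.1 hμaA'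
      obtain ⟨b, hbB, hpb⟩ := (hmemB' b').1 hb'
      have habK : a - b ∈ K := by
        refine Submodule.mem_inf.2 ⟨sub_mem ha (hBA hbB), ?_⟩
        rw [Submodule.mem_comap]
        have : μ (a - b) = h := by
          rw [map_sub]
          have h1 : μ a = b' + h := hsum.symm
          have h2 : μ b = b' := hpb
          rw [h1, h2]; abel
        rw [this]; exact hh
      rw [← hBpCsup] at habK
      have hBpC_le : Bp ⊔ C ≤ B ⊔ C :=
        sup_le (le_trans inf_le_left le_sup_left) le_sup_right
      have : a = b + (a - b) := by abel
      rw [this]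
      exact add_mem (Submodule.mem_sup_left hbB) (hBpC_le habK)

private lemma end_pow_succ {H : Type*} [AddCommGroup H] (φ : AddMonoid.End H) (k : ℕ) (x : H) :
    (φ ^ (k + 1)) x = φ ((φ ^ k) x) := by
  have := end_pow_add φ 1 k x
  simpa [add_comm] using this

private lemma stab_gen {H : Type*} [AddCommGroup H] (φ : AddMonoid.End H) (n : ℕ)
    (hs : ∀ x, (φ ^ (n + 1)) x = 0 → (φ ^ n) x = 0) :
    ∀ (j : ℕ) (x : H), (φ ^ (n + j)) x = 0 → (φ ^ n) x = 0 := by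
  intro j
  induction j with
  | zero => intro x hx; simpa using hx
  | succ j ihj =>
    intro x hx
    have h1 : (φ ^ (n + 1)) ((φ ^ j) x) = 0 := by
      rw [← end_pow_add]
      have heq : n + 1 + j = n + (j + 1) := by omega
      rw [heq]
      exact hx
    have h2 := hs _ h1
    have h3 : (φ ^ (n + j)) x = 0 := by
      rw [end_pow_add]
      exact h2
    exact ihj x h3

theorem stmt6 (G : Type*) [AddCommGroup G] (h : UniformlyStronglyHopfian G) :
    StronglyHopfian (AddCommGroup.torsion G) := by
  obtain ⟨n, hinj⟩ := h
  -- single-step kernel stabilization for endomorphisms of G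
  have hstep : ∀ (φ : AddMonoid.End G) (x : G), (φ ^ (n + 1)) x = 0 → (φ ^ n) x = 0 := by
    intro φ x hx
    have h1 : (φ ^ n) x ∈ Set.range ((φ ^ n : G →+ G) : G → G) := ⟨x, rfl⟩
    have h2 : (0 : G) ∈ Set.range ((φ ^ n : G →+ G) : G → G) := ⟨0, map_zero _⟩
    refine hinj φ h1 h2 ?_
    have : φ ((φ ^ n) x) = (φ ^ (n + 1)) x := by
      have := (end_pow_add φ 1 n x).symm
      simpa [add_comm] using this
    rw [this, hx, map_zero]
  -- multiplication lemma : k^(n+j) • g = 0 → k^n • g = 0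
  have hmult : ∀ (k : ℤ) (j : ℕ) (g : G), k ^ (n + j) • g = 0 → k ^ n • g = 0 := by
    intro k j g hg
    set φ : AddMonoid.End G := AddMonoidHom.mk' (fun g => k • g) (fun a b => smul_add k a b)
      with hφ
    have hφpow : ∀ (m : ℕ) (x : G), (φ ^ m) x = k ^ m • x := by
      intro m
      induction m with
      | zero => intro x; simp
      | succ m ihm =>
        intro x
        have : (φ ^ (m + 1)) x = φ ((φ ^ m) x) := by
          have := end_pow_add φ 1 m x
          simpa [add_comm] using this
        rw [this, ihm]
        show k • k ^ m • x = k ^ (m + 1) • x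
        rw [smul_smul, ← pow_succ']
    have := stab_gen φ n (fun x hx => hstep φ x hx) j g (by rw [hφpow]; exact hg)
    rw [hφpow] at this
    exact this
  set T := AddCommGroup.torsion G with hT
  intro ψ
  refine ⟨n, ?_⟩
  -- the key single prime case
  have hprime : ∀ (p : ℕ), p.Prime → ∀ (x : ↥T), (∃ a : ℕ, (p : ℤ) ^ a • (x : G) = 0) →
      (ψ ^ (n + 1)) x = 0 → (ψ ^ n) x = 0 := by
    intro p hp x ⟨a, hpa⟩ hx1
    have hpZ : Prime ((p : ℤ)) := Nat.prime_iff_prime_int.mp hp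
    have hxn : (p : ℤ) ^ n • (x : G) = 0 := by
      apply hmult (p : ℤ) a
      rw [pow_add, mul_smul, hpa, smul_zero]
    set B : Submodule ℤ G := LinearMap.ker ((p : ℤ) ^ n • (LinearMap.id : G →ₗ[ℤ] G)) with hB
    have hmemB : ∀ g : G, g ∈ B ↔ (p : ℤ) ^ n • g = 0 := by
      intro g
      rw [hB, LinearMap.mem_ker]
      have : ((p : ℤ) ^ n • (LinearMap.id : G →ₗ[ℤ] G)) g = (p : ℤ) ^ n • g := rfl
      rw [this]
    have hBT : ∀ g ∈ B, g ∈ T := by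
      intro g hg
      have h1 : (p ^ n : ℕ) • g = 0 := by
        have h2 := (hmemB g).1 hg
        rw [← natCast_zsmul]
        push_cast
        exact h2
      exact isOfFinAddOrder_iff_nsmul_eq_zero.2
        ⟨p ^ n, pow_pos hp.pos n, h1⟩
    have hψB : ∀ (t : ↥T), (t : G) ∈ B → ((ψ t : ↥T) : G) ∈ B := by
      intro t ht
      rw [hmemB] at ht ⊢
      have h1 : (p : ℤ) ^ n • t = 0 := by
        apply Subtype.ext
        push_cast
        simpa using ht
      have h2 : (p : ℤ) ^ n • ψ t = 0 := by
        rw [← map_zsmul ψ, h1, map_zero]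
      calc (p : ℤ) ^ n • ((ψ t : ↥T) : G) = (((p : ℤ) ^ n • ψ t : ↥T) : G) := by push_cast; rfl
        _ = 0 := by rw [h2]; rfl
    obtain ⟨C, -, hBC, hBCsup⟩ := kulikov_compl (p : ℤ) hpZ n ⊤ B le_top
      (fun b hb => (hmemB b).1 hb)
      (by
        intro j g _ hg
        rw [hmemB] at hg
        have h3 : (p : ℤ) ^ (n + j) • g = 0 := by
          rw [pow_add, mul_smul]; exact hg
        exact ⟨g, (hmemB g).2 (hmult (p : ℤ) j g h3), rfl⟩)
    have hcompl : IsCompl B C := ⟨disjoint_iff.2 hBC, codisjoint_iff.2 hBCsup⟩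
    set π := Submodule.linearProjOfIsCompl B C hcompl with hπ
    set f : ↥B →+ G := AddMonoidHom.mk'
      (fun b => ((ψ ⟨(b : G), hBT _ b.2⟩ : ↥T) : G))
      (by
        intro b c
        have h4 : (⟨((b + c : ↥B) : G), hBT _ (b + c).2⟩ : ↥T)
            = ⟨(b : G), hBT _ b.2⟩ + ⟨(c : G), hBT _ c.2⟩ := by
          apply Subtype.ext; rfl
        show ((ψ ⟨((b + c : ↥B) : G), hBT _ (b + c).2⟩ : ↥T) : G) = _
        rw [h4, map_add]
        rfl) with hf
    set φ : AddMonoid.End G := f.comp π.toAddMonoidHom with hφ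
    have hiter : ∀ (k : ℕ) (t : ↥T), (t : G) ∈ B →
        ((φ ^ k) (t : G)) = (((ψ ^ k) t : ↥T) : G) ∧ (((ψ ^ k) t : ↥T) : G) ∈ B := by
      intro k
      induction k with
      | zero =>
        intro t ht
        constructor
        · simp
        · simpa using ht
      | succ k ihk =>
        intro t ht
        obtain ⟨ih1, ih2⟩ := ihk t ht
        have hsucc : (ψ ^ (k + 1)) t = ψ ((ψ ^ k) t) := end_pow_succ ψ k t
        constructor
        · rw [end_pow_succ φ k, ih1]
          show f (π (((ψ ^ k) t : ↥T) : G)) = _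
          have hproj : π (((ψ ^ k) t : ↥T) : G)
              = (⟨(((ψ ^ k) t : ↥T) : G), ih2⟩ : ↥B) :=
            Submodule.linearProjOfIsCompl_apply_left hcompl
              (⟨(((ψ ^ k) t : ↥T) : G), ih2⟩ : ↥B)
          rw [hproj]
          show ((ψ ⟨(((ψ ^ k) t : ↥T) : G), hBT _ ih2⟩ : ↥T) : G) = _
          have h5 : (⟨(((ψ ^ k) t : ↥T) : G), hBT _ ih2⟩ : ↥T) = (ψ ^ k) t :=
            Subtype.ext rfl
          rw [h5, hsucc]
        · rw [hsucc]
          exact hψB ((ψ ^ k) t) ih2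
    have hxB : (x : G) ∈ B := (hmemB _).2 hxn
    obtain ⟨hit1, -⟩ := hiter (n + 1) x hxB
    have hφx : (φ ^ (n + 1)) (x : G) = 0 := by
      rw [hit1, hx1]; rfl
    have hφn := hstep φ (x : G) hφx
    obtain ⟨hit2, -⟩ := hiter n x hxB
    rw [hit2] at hφn
    exact Subtype.ext (by simpa using hφn)
  -- reduction to prime power order via strong induction on the order
  have hsingle : ∀ (x : ↥T), (ψ ^ (n + 1)) x = 0 → (ψ ^ n) x = 0 := by
    have hd : ∀ (d : ℕ), d ≠ 0 → ∀ x : ↥T, d • (x : G) = 0 →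
        (ψ ^ (n + 1)) x = 0 → (ψ ^ n) x = 0 := by
      intro d
      induction d using Nat.strong_induction_on with
      | _ d ihd =>
        intro hd0 x hdx hx1
        by_cases hd1 : d = 1
        · subst hd1
          have : (x : G) = 0 := by simpa using hdx
          have hx0 : x = 0 := by exact_mod_cast Subtype.ext this
          rw [hx0, map_zero]
        · set q := d.minFac with hq
          have hqp : q.Prime := Nat.minFac_prime hd1
          have hqd : q ∣ d := Nat.minFac_dvd d
          set a := d.factorization q with ha
          set m := d / q ^ a with hm
          have hdm : q ^ a * m = d := Nat.ordProj_mul_ordCompl_eq_self d q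
          have ha1 : 1 ≤ a := (Nat.Prime.factorization_pos_of_dvd hqp hd0 hqd)
          have hqa1 : 1 < q ^ a := Nat.one_lt_pow (by omega) hqp.one_lt
          have hmd : m < d := Nat.div_lt_self (Nat.pos_of_ne_zero hd0) hqa1
          have hm0 : m ≠ 0 := by
            intro h
            rw [h, mul_zero] at hdm
            exact hd0 hdm.symm
          have hcop : Nat.Coprime (q ^ a) m := (Nat.coprime_ordCompl hqp hd0).pow_left a
          have hicop : IsCoprime ((q : ℤ) ^ a) (m : ℤ) := by
            rw [← Nat.cast_pow]
            exact (Nat.isCoprime_iff_coprime).2 hcop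
          obtain ⟨u, v, huv⟩ := hicop
          have hdxz : (d : ℤ) • (x : G) = 0 := by
            rw [natCast_zsmul]
            exact hdx
          set y : ↥T := (v * (m : ℤ)) • x with hy
          set z : ↥T := (u * (q : ℤ) ^ a) • x with hz
          have hxyz : x = z + y := by
            rw [hz, hy, ← add_smul]
            have : u * (q : ℤ) ^ a + v * (m : ℤ) = 1 := huv
            rw [this, one_smul]
          -- y is killed by q ^ a
          have hyq : (q : ℤ) ^ a • (y : G) = 0 := by
            have : (y : G) = (v * (m : ℤ)) • (x : G) := rfl
            rw [this, smul_smul]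
            have heq : (q : ℤ) ^ a * (v * (m : ℤ)) = v * (d : ℤ) := by
              rw [← hdm]; push_cast; ring
            rw [heq, mul_smul, hdxz, smul_zero]
          have hy1 : (ψ ^ (n + 1)) y = 0 := by
            rw [hy, map_zsmul, hx1, smul_zero]
          have hyn : (ψ ^ n) y = 0 := hprime q hqp y ⟨a, hyq⟩ hy1
          -- z is killed by m
          have hzm : m • (z : G) = 0 := by
            rw [← natCast_zsmul]
            have : (z : G) = (u * (q : ℤ) ^ a) • (x : G) := rfl
            rw [this, smul_smul]
            have heq : (m : ℤ) * (u * (q : ℤ) ^ a) = u * (d : ℤ) := by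
              rw [← hdm]; push_cast; ring
            rw [heq, mul_smul, hdxz, smul_zero]
          have hz1 : (ψ ^ (n + 1)) z = 0 := by
            rw [hz, map_zsmul, hx1, smul_zero]
          have hzn : (ψ ^ n) z = 0 := ihd m hmd hm0 z hzm hz1
          rw [hxyz, map_add, hyn, hzn, add_zero]
    intro x hx1
    have hxT : IsOfFinAddOrder (x : G) := x.2
    refine hd (addOrderOf (x : G)) ?_ x ?_ hx1
    · exact (hxT.addOrderOf_pos).ne'
    · exact addOrderOf_nsmul_eq_zero (x : G)
  -- conclude
  intro m hm
  ext x
  show (ψ ^ m) x = 0 ↔ (ψ ^ n) x = 0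
  constructor
  · intro hx
    have : (ψ ^ (n + (m - n))) x = 0 := by
      rwa [Nat.add_sub_cancel' hm]
    exact stab_gen ψ n (fun x hx => hsingle x hx) (m - n) x this
  · intro hx
    have hmeq : m = (m - n) + n := (Nat.sub_add_cancel hm).symm
    rw [hmeq, end_pow_add, hx, map_zero]
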